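/- For every n ≥ 1, the number of permutations of {1,...,n} avoiding the pattern 231 equals the n-th Catalan number C_n = (1/(n+1))·binom(2n, n). -/
import Mathlib

def Contains {n k : ℕ} (σ : Equiv.Perm (Fin n)) (π : Equiv.Perm (Fin k)) : Prop :=
  ∃ f : Fin k → Fin n, StrictMono f ∧ ∀ a b : Fin k, π a < π b ↔ σ (f a) < σ (f b)

def Avoids {n k : ℕ} (σ : Equiv.Perm (Fin n)) (π : Equiv.Perm (Fin k)) : Prop :=
  ¬ Contains σ π

lemma contains_231_iff {n : ℕ} (σ : Equiv.Perm (Fin n)) :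
    Contains σ (finRotate 3) ↔
      ∃ i j k : Fin n, i < j ∧ j < k ∧ σ k < σ i ∧ σ i < σ j := by
  constructor
  · rintro ⟨f, hf, hiff⟩
    refine ⟨f 0, f 1, f 2, hf (by decide), hf (by decide), ?_, ?_⟩
    · exact (hiff 2 0).mp (by decide)
    · exact (hiff 0 1).mp (by decide)
  · rintro ⟨i, j, k, hij, hjk, h1, h2⟩
    refine ⟨![i, j, k], ?_, ?_⟩
    · intro a b hab
      fin_cases a <;> fin_cases b <;> simp_all <;> omega
    · intro a b
      have h3 : σ k < σ j := h1.trans h2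
      fin_cases a <;> fin_cases b <;>
        simp_all [lt_asymm, lt_irrefl] <;> omega

def glueFun (p q : ℕ) (α : Equiv.Perm (Fin p)) (β : Equiv.Perm (Fin q)) :
    Fin (p + 1 + q) → Fin (p + 1 + q) := fun x =>
  if h : (x : ℕ) < p then ⟨α ⟨x, h⟩, by have := (α ⟨x, h⟩).isLt; omega⟩
  else if h2 : (x : ℕ) = p then ⟨p + q, by omega⟩
  else ⟨p + β ⟨(x : ℕ) - (p + 1), by have := x.isLt; omega⟩, by
    have := (β ⟨(x : ℕ) - (p + 1), by have := x.isLt; omega⟩).isLt; omega⟩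

lemma glueFun_lt (p q : ℕ) (α : Equiv.Perm (Fin p)) (β : Equiv.Perm (Fin q))
    (x : Fin (p + 1 + q)) (h : (x : ℕ) < p) :
    (glueFun p q α β x : ℕ) = α ⟨x, h⟩ := by simp [glueFun, h]

lemma glueFun_eq (p q : ℕ) (α : Equiv.Perm (Fin p)) (β : Equiv.Perm (Fin q))
    (x : Fin (p + 1 + q)) (h : (x : ℕ) = p) :
    (glueFun p q α β x : ℕ) = p + q := by simp [glueFun, h]

lemma glueFun_gt (p q : ℕ) (α : Equiv.Perm (Fin p)) (β : Equiv.Perm (Fin q))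
    (x : Fin (p + 1 + q)) (h : p < (x : ℕ)) :
    (glueFun p q α β x : ℕ) = p + β ⟨(x : ℕ) - (p + 1), by have := x.isLt; omega⟩ := by
  simp [glueFun, Nat.not_lt.mpr h.le, h.ne']

lemma glueFun_injective (p q : ℕ) (α : Equiv.Perm (Fin p)) (β : Equiv.Perm (Fin q)) :
    Function.Injective (glueFun p q α β) := by
  intro x y hxy
  have hxy' : (glueFun p q α β x : ℕ) = (glueFun p q α β y : ℕ) := congrArg Fin.val hxy
  rcases lt_trichotomy (x : ℕ) p with hx | hx | hx <;>
    rcases lt_trichotomy (y : ℕ) p with hy | hy | hy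
  · rw [glueFun_lt p q α β x hx, glueFun_lt p q α β y hy] at hxy'
    have := congrArg Fin.val (α.injective (a₁ := ⟨x, hx⟩) (a₂ := ⟨y, hy⟩) (Fin.ext hxy'))
    simp only at this
    exact Fin.ext this
  · rw [glueFun_lt p q α β x hx, glueFun_eq p q α β y hy] at hxy'
    have := (α ⟨x, hx⟩).isLt; omega
  · rw [glueFun_lt p q α β x hx, glueFun_gt p q α β y hy] at hxy'
    have := (α ⟨x, hx⟩).isLt; omega
  · rw [glueFun_eq p q α β x hx, glueFun_lt p q α β y hy] at hxy'
    have := (α ⟨y, hy⟩).isLt; omega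
  · exact Fin.ext (by omega)
  · rw [glueFun_eq p q α β x hx, glueFun_gt p q α β y hy] at hxy'
    have := (β ⟨(y:ℕ) - (p+1), by have := y.isLt; omega⟩).isLt; omega
  · rw [glueFun_gt p q α β x hx, glueFun_lt p q α β y hy] at hxy'
    have := (α ⟨y, hy⟩).isLt; omega
  · rw [glueFun_gt p q α β x hx, glueFun_eq p q α β y hy] at hxy'
    have := (β ⟨(x:ℕ) - (p+1), by have := x.isLt; omega⟩).isLt; omega
  · rw [glueFun_gt p q α β x hx, glueFun_gt p q α β y hy] at hxy'
    have hb : (β ⟨(x:ℕ) - (p+1), by have := x.isLt; omega⟩ : ℕ)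
        = (β ⟨(y:ℕ) - (p+1), by have := y.isLt; omega⟩ : ℕ) := by omega
    have := congrArg Fin.val (β.injective (Fin.ext hb))
    simp only at this
    exact Fin.ext (by omega)

noncomputable def glue (p q : ℕ) (α : Equiv.Perm (Fin p)) (β : Equiv.Perm (Fin q)) :
    Equiv.Perm (Fin (p + 1 + q)) :=
  Equiv.ofBijective _ (Finite.injective_iff_bijective.mp (glueFun_injective p q α β))

lemma glue_apply (p q : ℕ) (α : Equiv.Perm (Fin p)) (β : Equiv.Perm (Fin q))
    (x : Fin (p + 1 + q)) : glue p q α β x = glueFun p q α β x := rfl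

lemma glueFun_le (p q : ℕ) (α : Equiv.Perm (Fin p)) (β : Equiv.Perm (Fin q))
    (x : Fin (p + 1 + q)) : (glueFun p q α β x : ℕ) ≤ p + q := by
  rcases lt_trichotomy (x : ℕ) p with h | h | h
  · rw [glueFun_lt p q α β x h]; have := (α ⟨x, h⟩).isLt; omega
  · rw [glueFun_eq p q α β x h]
  · rw [glueFun_gt p q α β x h]
    have := (β ⟨(x:ℕ) - (p+1), by have := x.isLt; omega⟩).isLt; omega

lemma glue_avoids {p q : ℕ} {α : Equiv.Perm (Fin p)} {β : Equiv.Perm (Fin q)}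
    (hα : Avoids α (finRotate 3)) (hβ : Avoids β (finRotate 3)) :
    Avoids (glue p q α β) (finRotate 3) := by
  rw [Avoids, contains_231_iff]
  rintro ⟨i, j, k, hij, hjk, h1, h2⟩
  rw [Fin.lt_def] at hij hjk h1 h2
  simp only [glue_apply] at h1 h2
  rcases lt_trichotomy (k : ℕ) p with hk | hk | hk
  · -- all three in the left block: pattern in α
    have hi : (i : ℕ) < p := by omega
    have hj : (j : ℕ) < p := by omega
    rw [glueFun_lt p q α β i hi, glueFun_lt p q α β k hk] at h1
    rw [glueFun_lt p q α β i hi, glueFun_lt p q α β j hj] at h2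
    refine hα ?_
    rw [contains_231_iff]
    exact ⟨⟨i, hi⟩, ⟨j, hj⟩, ⟨k, hk⟩, by rw [Fin.lt_def]; exact hij,
      by rw [Fin.lt_def]; exact hjk, by rw [Fin.lt_def]; exact h1,
      by rw [Fin.lt_def]; exact h2⟩
  · rw [glueFun_eq p q α β k hk] at h1
    have := glueFun_le p q α β i; omega
  · rcases lt_trichotomy (i : ℕ) p with hi | hi | hi
    · rw [glueFun_lt p q α β i hi, glueFun_gt p q α β k hk] at h1
      have := (α ⟨i, hi⟩).isLt; omega
    · rw [glueFun_eq p q α β i hi] at h2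
      have := glueFun_le p q α β j; omega
    · have hj : p < (j : ℕ) := by omega
      rw [glueFun_gt p q α β i hi, glueFun_gt p q α β k hk] at h1
      rw [glueFun_gt p q α β i hi, glueFun_gt p q α β j hj] at h2
      refine hβ ?_
      rw [contains_231_iff]
      refine ⟨⟨(i:ℕ) - (p+1), by have := i.isLt; omega⟩,
        ⟨(j:ℕ) - (p+1), by have := j.isLt; omega⟩,
        ⟨(k:ℕ) - (p+1), by have := k.isLt; omega⟩,
        Fin.mk_lt_mk.mpr (by omega), Fin.mk_lt_mk.mpr (by omega),
        by rw [Fin.lt_def]; omega, by rw [Fin.lt_def]; omega⟩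

section Decomp

variable {n : ℕ} (σ : Equiv.Perm (Fin (n + 1))) (hσ : Avoids σ (finRotate 3))

local notation "pp" => σ.symm (Fin.last n)

lemma sigma_maxpos : σ (σ.symm (Fin.last n)) = Fin.last n := σ.apply_symm_apply _

lemma sigma_mono (hσ : Avoids σ (finRotate 3)) :
    ∀ a b : Fin (n + 1), (a : ℕ) < (pp : ℕ) → ((pp : ℕ) < (b : ℕ)) → σ a < σ b := by
  intro a b ha hb
  by_contra hc
  have hab : a ≠ b := by intro h; subst h; omega
  have h1 : σ b < σ a := by
    rcases lt_trichotomy (σ a) (σ b) with h | h | h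
    · exact absurd h hc
    · exact absurd (σ.injective h) hab
    · exact h
  have h2 : σ a < σ (σ.symm (Fin.last n)) := by
    rw [sigma_maxpos]
    refine lt_of_le_of_ne (Fin.le_last _) ?_
    intro h
    exact absurd (σ.injective (h.trans (sigma_maxpos σ).symm)) (by intro h'; subst h'; omega)
  exact hσ ((contains_231_iff σ).mpr ⟨a, pp, b, Fin.lt_def.mpr ha, Fin.lt_def.mpr hb, h1, h2⟩)

lemma keyA (hσ : Avoids σ (finRotate 3)) :
    ∀ a : Fin (n + 1), (a : ℕ) < (pp : ℕ) → (σ a : ℕ) < (pp : ℕ) := by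
  intro a ha
  have hsub : (Finset.Ici pp).image σ ⊆ Finset.Ioi (σ a) := by
    intro v hv
    simp only [Finset.mem_image, Finset.mem_Ici] at hv
    obtain ⟨x, hx, rfl⟩ := hv
    rw [Finset.mem_Ioi]
    rcases eq_or_lt_of_le hx with h | h
    · subst h
      rw [sigma_maxpos]
      refine lt_of_le_of_ne (Fin.le_last _) ?_
      intro h
      exact absurd (σ.injective (h.trans (sigma_maxpos σ).symm)) (by intro h'; subst h'; omega)
    · exact sigma_mono σ hσ a x ha (Fin.lt_def.mp h)
  have hcard : ((Finset.Ici pp).image σ).card = (Finset.Ici pp).card :=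
    Finset.card_image_of_injective _ σ.injective
  have h1 : (Finset.Ici pp).card = n + 1 - (pp : ℕ) := by
    rw [Fin.card_Ici]
  have h2 : (Finset.Ioi (σ a)).card = n - (σ a : ℕ) := by
    rw [Fin.card_Ioi]; omega
  have := Finset.card_le_card hsub
  omega

lemma keyB (hσ : Avoids σ (finRotate 3)) :
    ∀ b : Fin (n + 1), (pp : ℕ) < (b : ℕ) → (pp : ℕ) ≤ (σ b : ℕ) ∧ (σ b : ℕ) < n := by
  intro b hb
  constructor
  · by_contra hc
    push_neg at hc
    -- σ b < p ; but values < p are all hit by positions < p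
    have hsub : (Finset.Iio pp).image σ ⊆ Finset.Iio pp := by
      intro v hv
      simp only [Finset.mem_image, Finset.mem_Iio] at hv ⊢
      obtain ⟨x, hx, rfl⟩ := hv
      exact Fin.lt_def.mpr (keyA σ hσ x (Fin.lt_def.mp hx))
    have heq : (Finset.Iio pp).image σ = Finset.Iio pp := by
      refine Finset.eq_of_subset_of_card_le hsub ?_
      rw [Finset.card_image_of_injective _ σ.injective]
    have hmem : σ b ∈ Finset.Iio pp := Finset.mem_Iio.mpr (Fin.lt_def.mpr hc)
    rw [← heq] at hmem
    simp only [Finset.mem_image, Finset.mem_Iio] at hmem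
    obtain ⟨x, hx, hxe⟩ := hmem
    have := σ.injective hxe
    subst this
    omega
  · have hne : σ b ≠ Fin.last n := by
      intro h
      exact absurd (σ.injective (h.trans (sigma_maxpos σ).symm)) (by intro h'; subst h'; omega)
    have hle : (σ b : ℕ) ≤ n := by
      have := Fin.le_last (σ b); rwa [Fin.le_def, Fin.val_last] at this
    rcases eq_or_lt_of_le hle with h | h
    · exact absurd (Fin.ext (by simp [h])) hne
    · exact h

end Decomp

variable {n : ℕ}

noncomputable def leftPerm (σ : Equiv.Perm (Fin (n + 1))) (hσ : Avoids σ (finRotate 3)) :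
    Equiv.Perm (Fin ((σ.symm (Fin.last n) : ℕ))) := by
  refine Equiv.ofBijective (fun a =>
    ⟨(σ ⟨(a : ℕ), by have := a.isLt; have := (σ.symm (Fin.last n)).isLt; omega⟩ : ℕ),
      keyA σ hσ _ a.isLt⟩) (Finite.injective_iff_bijective.mp ?_)
  intro a b hab
  simp only [Fin.mk.injEq] at hab
  have := σ.injective (Fin.ext hab)
  simp only [Fin.mk.injEq] at this
  exact Fin.ext this

lemma leftPerm_val (σ : Equiv.Perm (Fin (n + 1))) (hσ : Avoids σ (finRotate 3))
    (a : Fin ((σ.symm (Fin.last n) : ℕ))) :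
    (leftPerm σ hσ a : ℕ)
      = (σ ⟨(a : ℕ), by have := a.isLt; have := (σ.symm (Fin.last n)).isLt; omega⟩ : ℕ) := rfl

noncomputable def rightPerm (σ : Equiv.Perm (Fin (n + 1))) (hσ : Avoids σ (finRotate 3)) :
    Equiv.Perm (Fin (n - (σ.symm (Fin.last n) : ℕ))) := by
  refine Equiv.ofBijective (fun b =>
    ⟨(σ ⟨(σ.symm (Fin.last n) : ℕ) + 1 + (b : ℕ), by have := b.isLt; omega⟩ : ℕ)
        - (σ.symm (Fin.last n) : ℕ), ?_⟩) (Finite.injective_iff_bijective.mp ?_)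
  · have := keyB σ hσ ⟨(σ.symm (Fin.last n) : ℕ) + 1 + (b : ℕ), by have := b.isLt; omega⟩
      (by simp; omega)
    omega
  · intro a b hab
    simp only [Fin.mk.injEq] at hab
    have ha := keyB σ hσ ⟨(σ.symm (Fin.last n) : ℕ) + 1 + (a : ℕ), by have := a.isLt; omega⟩
      (by simp; omega)
    have hb := keyB σ hσ ⟨(σ.symm (Fin.last n) : ℕ) + 1 + (b : ℕ), by have := b.isLt; omega⟩
      (by simp; omega)
    have : σ ⟨(σ.symm (Fin.last n) : ℕ) + 1 + (a : ℕ), by have := a.isLt; omega⟩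
        = σ ⟨(σ.symm (Fin.last n) : ℕ) + 1 + (b : ℕ), by have := b.isLt; omega⟩ :=
      Fin.ext (by omega)
    have := σ.injective this
    simp only [Fin.mk.injEq] at this
    exact Fin.ext (by omega)

lemma rightPerm_val (σ : Equiv.Perm (Fin (n + 1))) (hσ : Avoids σ (finRotate 3))
    (b : Fin (n - (σ.symm (Fin.last n) : ℕ))) :
    (rightPerm σ hσ b : ℕ)
      = (σ ⟨(σ.symm (Fin.last n) : ℕ) + 1 + (b : ℕ), by have := b.isLt; omega⟩ : ℕ)
          - (σ.symm (Fin.last n) : ℕ) := rfl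

lemma leftPerm_avoids (σ : Equiv.Perm (Fin (n + 1))) (hσ : Avoids σ (finRotate 3)) :
    Avoids (leftPerm σ hσ) (finRotate 3) := by
  rw [Avoids, contains_231_iff]
  rintro ⟨i, j, k, hij, hjk, h1, h2⟩
  rw [Fin.lt_def] at hij hjk h1 h2
  rw [leftPerm_val, leftPerm_val] at h1 h2
  have hp := (σ.symm (Fin.last n)).isLt
  refine hσ ((contains_231_iff σ).mpr
    ⟨⟨(i : ℕ), by have := i.isLt; omega⟩, ⟨(j : ℕ), by have := j.isLt; omega⟩,
     ⟨(k : ℕ), by have := k.isLt; omega⟩, Fin.mk_lt_mk.mpr hij, Fin.mk_lt_mk.mpr hjk,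
     Fin.lt_def.mpr h1, Fin.lt_def.mpr h2⟩)

lemma rightPerm_avoids (σ : Equiv.Perm (Fin (n + 1))) (hσ : Avoids σ (finRotate 3)) :
    Avoids (rightPerm σ hσ) (finRotate 3) := by
  rw [Avoids, contains_231_iff]
  rintro ⟨i, j, k, hij, hjk, h1, h2⟩
  rw [Fin.lt_def] at hij hjk h1 h2
  rw [rightPerm_val, rightPerm_val] at h1 h2
  have hp := (σ.symm (Fin.last n)).isLt
  have hBi := keyB σ hσ ⟨(σ.symm (Fin.last n) : ℕ) + 1 + (i : ℕ), by have := i.isLt; omega⟩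
    (by simp; omega)
  have hBj := keyB σ hσ ⟨(σ.symm (Fin.last n) : ℕ) + 1 + (j : ℕ), by have := j.isLt; omega⟩
    (by simp; omega)
  have hBk := keyB σ hσ ⟨(σ.symm (Fin.last n) : ℕ) + 1 + (k : ℕ), by have := k.isLt; omega⟩
    (by simp; omega)
  refine hσ ((contains_231_iff σ).mpr
    ⟨⟨(σ.symm (Fin.last n) : ℕ) + 1 + (i : ℕ), by have := i.isLt; omega⟩,
     ⟨(σ.symm (Fin.last n) : ℕ) + 1 + (j : ℕ), by have := j.isLt; omega⟩,
     ⟨(σ.symm (Fin.last n) : ℕ) + 1 + (k : ℕ), by have := k.isLt; omega⟩,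
     Fin.mk_lt_mk.mpr (by omega), Fin.mk_lt_mk.mpr (by omega),
     Fin.lt_def.mpr (by omega), Fin.lt_def.mpr (by omega)⟩)

lemma glue_decomp (σ : Equiv.Perm (Fin (n + 1))) (hσ : Avoids σ (finRotate 3))
    (x : Fin ((σ.symm (Fin.last n) : ℕ) + 1 + (n - (σ.symm (Fin.last n) : ℕ)))) :
    (glue _ _ (leftPerm σ hσ) (rightPerm σ hσ) x : ℕ)
      = (σ ⟨(x : ℕ), by have := x.isLt; have := (σ.symm (Fin.last n)).isLt; omega⟩ : ℕ) := by
  have hp := (σ.symm (Fin.last n)).isLt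
  rw [glue_apply]
  rcases lt_trichotomy (x : ℕ) ((σ.symm (Fin.last n) : ℕ)) with h | h | h
  · rw [glueFun_lt _ _ _ _ x h, leftPerm_val]
  · rw [glueFun_eq _ _ _ _ x h]
    have : (⟨(x : ℕ), by omega⟩ : Fin (n + 1)) = σ.symm (Fin.last n) := Fin.ext h
    rw [this, sigma_maxpos]
    simp [Fin.val_last]
    omega
  · rw [glueFun_gt _ _ _ _ x h, rightPerm_val]
    have hB := keyB σ hσ ⟨(x : ℕ), by have := x.isLt; omega⟩ (by simpa using h)
    have harg : (⟨(σ.symm (Fin.last n) : ℕ) + 1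
          + ((x : ℕ) - ((σ.symm (Fin.last n) : ℕ) + 1)), by have := x.isLt; omega⟩ : Fin (n+1))
        = ⟨(x : ℕ), by have := x.isLt; omega⟩ := Fin.ext (by simp; omega)
    rw [harg]
    omega

lemma contains_permCongr {m m' : ℕ} (h : m = m') (σ : Equiv.Perm (Fin m)) {k : ℕ}
    (π : Equiv.Perm (Fin k)) (hc : Contains ((finCongr h).permCongr σ) π) : Contains σ π := by
  obtain ⟨f, hf, hiff⟩ := hc
  refine ⟨fun a => (finCongr h).symm (f a), ?_, ?_⟩
  · intro a b hab
    have := hf hab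
    rw [Fin.lt_def] at this ⊢
    simpa using this
  · intro a b
    rw [hiff a b]
    simp only [Equiv.permCongr_apply, Fin.lt_def, finCongr_apply, Fin.coe_cast]

lemma permCongr_val {m m' : ℕ} (h : m = m') (σ : Equiv.Perm (Fin m)) (x : Fin m') :
    (((finCongr h).permCongr σ) x : ℕ) = (σ ⟨(x : ℕ), h ▸ x.isLt⟩ : ℕ) := by
  simp only [Equiv.permCongr_apply, finCongr_apply, Fin.coe_cast]
  congr 1

abbrev AvSet (m : ℕ) : Type := {σ : Equiv.Perm (Fin m) // Avoids σ (finRotate 3)}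

noncomputable def Phi (n : ℕ)
    (x : Σ i : Fin (n + 1), AvSet (i : ℕ) × AvSet (n - (i : ℕ))) : AvSet (n + 1) :=
  ⟨(finCongr (show (x.1 : ℕ) + 1 + (n - (x.1 : ℕ)) = n + 1 by
      have := x.1.isLt; omega)).permCongr (glue _ _ x.2.1.1 x.2.2.1),
   fun hc => glue_avoids x.2.1.2 x.2.2.2 (contains_permCongr _ _ _ hc)⟩

lemma Phi_val {n : ℕ} (i : Fin (n + 1)) (αβ : AvSet (i : ℕ) × AvSet (n - (i : ℕ)))
    (x : Fin (n + 1)) :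
    ((Phi n ⟨i, αβ⟩).1 x : ℕ)
      = (glue (i : ℕ) (n - (i : ℕ)) αβ.1.1 αβ.2.1 ⟨(x : ℕ), by
          have := x.isLt; have := i.isLt; omega⟩ : ℕ) := by
  exact permCongr_val _ _ x

lemma glue_val_ne (p q : ℕ) (α : Equiv.Perm (Fin p)) (β : Equiv.Perm (Fin q))
    (x : Fin (p + 1 + q)) (hx : (x : ℕ) ≠ p) : (glue p q α β x : ℕ) < p + q := by
  rw [glue_apply]
  rcases lt_trichotomy (x : ℕ) p with h | h | h
  · rw [glueFun_lt _ _ _ _ x h]; have := (α ⟨x, h⟩).isLt; omega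
  · exact absurd h hx
  · rw [glueFun_gt _ _ _ _ x h]
    have := (β ⟨(x : ℕ) - (p + 1), by have := x.isLt; omega⟩).isLt; omega

lemma Phi_val_lt {n : ℕ} (i : Fin (n + 1)) (α : AvSet (i : ℕ)) (β : AvSet (n - (i : ℕ)))
    (x : Fin (n + 1)) (h : (x : ℕ) < (i : ℕ)) :
    ((Phi n ⟨i, (α, β)⟩).1 x : ℕ) = (α.1 ⟨(x : ℕ), h⟩ : ℕ) := by
  rw [Phi_val, glue_apply, glueFun_lt _ _ _ _ _ h]

lemma Phi_val_eq {n : ℕ} (i : Fin (n + 1)) (α : AvSet (i : ℕ)) (β : AvSet (n - (i : ℕ)))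
    (x : Fin (n + 1)) (h : (x : ℕ) = (i : ℕ)) :
    ((Phi n ⟨i, (α, β)⟩).1 x : ℕ) = n := by
  rw [Phi_val, glue_apply, glueFun_eq _ _ _ _ _ h]
  have := i.isLt; omega

lemma Phi_val_gt {n : ℕ} (i : Fin (n + 1)) (α : AvSet (i : ℕ)) (β : AvSet (n - (i : ℕ)))
    (x : Fin (n + 1)) (h : (i : ℕ) < (x : ℕ)) :
    ((Phi n ⟨i, (α, β)⟩).1 x : ℕ)
      = (i : ℕ) + (β.1 ⟨(x : ℕ) - ((i : ℕ) + 1), by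
          have := x.isLt; have := i.isLt; omega⟩ : ℕ) := by
  rw [Phi_val, glue_apply, glueFun_gt _ _ _ _ _ h]

set_option maxHeartbeats 1000000 in
lemma Phi_injective (n : ℕ) : Function.Injective (Phi n) := by
  rintro ⟨i, α, β⟩ ⟨i', α', β'⟩ hxy
  have hval : ∀ z : Fin (n + 1),
      ((Phi n ⟨i, α, β⟩).1 z : ℕ) = ((Phi n ⟨i', α', β'⟩).1 z : ℕ) := fun z => by rw [hxy]
  have hii : (i : ℕ) = (i' : ℕ) := by
    by_contra hne
    have h1 := hval i
    rw [Phi_val_eq i α β i rfl] at h1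
    rcases lt_or_gt_of_ne hne with h | h
    · rw [Phi_val_lt i' α' β' i h] at h1
      have h2 := (α'.1 ⟨(i : ℕ), h⟩).isLt
      have := i'.isLt; omega
    · rw [Phi_val_gt i' α' β' i h] at h1
      have h2 := (β'.1 ⟨(i : ℕ) - ((i' : ℕ) + 1), by
        have := i.isLt; have := i'.isLt; omega⟩).isLt
      have := i.isLt; omega
  obtain rfl : i = i' := Fin.ext hii
  suffices h : α = α' ∧ β = β' by rw [h.1, h.2]
  constructor
  · refine Subtype.ext (Equiv.ext fun a => ?_)
    have hai : (a : ℕ) < (i : ℕ) := a.isLt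
    have hz := hval ⟨(a : ℕ), by have := i.isLt; omega⟩
    rw [Phi_val_lt i α β _ hai, Phi_val_lt i α' β' _ hai] at hz
    refine Fin.ext ?_
    have e1 : (⟨(a : ℕ), hai⟩ : Fin (i : ℕ)) = a := Fin.ext rfl
    rw [e1] at hz
    exact hz
  · refine Subtype.ext (Equiv.ext fun b => ?_)
    have hb := b.isLt
    have hi := i.isLt
    set z : Fin (n + 1) := ⟨(i : ℕ) + 1 + (b : ℕ), by omega⟩ with hzdef
    have hzv : (z : ℕ) = (i : ℕ) + 1 + (b : ℕ) := rfl
    have hgt : (i : ℕ) < (z : ℕ) := by omega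
    have hz := hval z
    rw [Phi_val_gt i α β z hgt, Phi_val_gt i α' β' z hgt] at hz
    have e1 : (⟨(z : ℕ) - ((i : ℕ) + 1), by omega⟩ : Fin (n - (i : ℕ))) = b :=
      Fin.ext (show (z : ℕ) - ((i : ℕ) + 1) = (b : ℕ) by omega)
    rw [e1] at hz
    exact Fin.ext (by omega)

lemma Phi_surjective (n : ℕ) : Function.Surjective (Phi n) := by
  rintro ⟨σ, hσ⟩
  refine ⟨⟨σ.symm (Fin.last n), ⟨leftPerm σ hσ, leftPerm_avoids σ hσ⟩,
    ⟨rightPerm σ hσ, rightPerm_avoids σ hσ⟩⟩, ?_⟩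
  refine Subtype.ext (Equiv.ext fun x => Fin.ext ?_)
  rw [Phi_val]
  rw [glue_decomp σ hσ]

lemma natCard_sigma {k : ℕ} (A : Fin k → Type) [∀ i, Finite (A i)] :
    Nat.card (Σ i, A i) = ∑ i, Nat.card (A i) := by
  classical
  letI : ∀ i, Fintype (A i) := fun i => Fintype.ofFinite (A i)
  simp [Nat.card_eq_fintype_card, Fintype.card_sigma]

lemma card_rec (n : ℕ) :
    Nat.card (AvSet (n + 1))
      = ∑ i : Fin (n + 1), Nat.card (AvSet (i : ℕ)) * Nat.card (AvSet (n - (i : ℕ))) := by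
  rw [← Nat.card_eq_of_bijective (Phi n) ⟨Phi_injective n, Phi_surjective n⟩]
  rw [natCard_sigma]
  exact Finset.sum_congr rfl fun i _ => Nat.card_prod _ _

lemma card_base : Nat.card (AvSet 0) = 1 := by
  have h : ∀ σ : Equiv.Perm (Fin 0), Avoids σ (finRotate 3) := by
    rintro σ ⟨f, hf, hiff⟩
    exact (f 0).elim0
  rw [Nat.card_congr (Equiv.subtypeUnivEquiv h), Nat.card_eq_fintype_card]
  simp

lemma card_catalan : ∀ m : ℕ, Nat.card (AvSet m) = catalan m := by
  intro m
  induction m using Nat.strong_induction_on with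
  | _ m IH =>
    match m with
    | 0 => rw [catalan_zero]; exact card_base
    | (k + 1) =>
      rw [card_rec k, catalan_succ k]
      refine Finset.sum_congr rfl fun i _ => ?_
      rw [IH (i : ℕ) (by have := i.isLt; omega), IH (k - (i : ℕ)) (by omega)]

/-- The number of permutations of size `n ≥ 1` avoiding the pattern 231 is the
`n`-th Catalan number. -/
theorem card_avoid_231 (n : ℕ) (hn : 1 ≤ n) :
    Nat.card {σ : Equiv.Perm (Fin n) // Avoids σ (finRotate 3)} = catalan n :=
  card_catalan n
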